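/- Let 0 < c < 1, 0 < α₊ ≤ c²/16, 0 < c₁ < 1, ε > 0, 0 < γ < c₁²·ε², and let G > 0 satisfy G ≥ 10·c₁²·ε². Let Λ₋ ≤ G, k₋ ∈ (1, (1/4)√((3/10)(69+11√33))], k₊ ≥ 2, and Λ₊ = (G/2)·(13+√185). Define the sets in ℝ³: 𝒜₀ = {(Λ₁,Λ₂,G₂) : G ≤ Λ₂ ≤ Λ₊, (G+Λ₂)·√((4G+Λ₂)/(5G)) < Λ₁ < min(k₊·Λ₂, 2Λ₊), and max((2/c)·√α₊·Λ₂, G) < G₂ < Λ₂}, and 𝒜₁ = {(Λ₁,Λ₂,G₂) : Λ₋ < Λ₂ < Λ₊, k₋·Λ₂ < Λ₁ < k₊·Λ₂, |Λ₁ − Λ₂ − G| < c₁²·ε², and Λ₂ − c₁²·ε² < G₂ < Λ₂ − γ}. Then 𝒜₀ ∩ 𝒜₁ is nonempty, and its three-dimensional Lebesgue measure satisfies vol(𝒜₀ ∩ 𝒜₁) ≥ (9/10)·(c₁²ε² − γ)·c₁⁴·ε⁴. -/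

import Mathlib

open MeasureTheory Set

private lemma sqrt_le_of_sq {a b : ℝ} (hb : 0 ≤ b) (hab : a ≤ b ^ 2) :
    Real.sqrt a ≤ b := by
  have := Real.sqrt_le_sqrt hab
  rwa [Real.sqrt_sq hb] at this

/-- The inverse shear `(x,y,z) ↦ (x-y, y, z-y)` preserves Lebesgue measure on `ℝ×ℝ×ℝ`. -/
private lemma shear_mp :
    MeasurePreserving (fun p : ℝ × ℝ × ℝ => (p.1 - p.2.1, p.2.1, p.2.2 - p.2.1))
      volume volume := by
  have hinner : MeasurePreserving (fun q : ℝ × ℝ => (q.1, q.2 - q.1))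
      (volume : Measure (ℝ × ℝ)) volume := by
    rw [Measure.volume_eq_prod]
    exact (MeasurePreserving.id (volume : Measure ℝ)).skew_product
      (g := fun a b => b - a) (by fun_prop)
      (Filter.Eventually.of_forall fun a => (measurePreserving_sub_right volume a).map_eq)
  have hstep1 : MeasurePreserving (fun p : ℝ × ℝ × ℝ => (p.1, p.2.1, p.2.2 - p.2.1))
      volume volume := by
    rw [Measure.volume_eq_prod]
    exact (MeasurePreserving.id (volume : Measure ℝ)).prod hinner
  have hswap1 : MeasurePreserving (Prod.swap : ℝ × (ℝ × ℝ) → (ℝ × ℝ) × ℝ)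
      volume volume := by
    rw [Measure.volume_eq_prod, Measure.volume_eq_prod]
    exact Measure.measurePreserving_swap
  have hswap2 : MeasurePreserving (Prod.swap : (ℝ × ℝ) × ℝ → ℝ × (ℝ × ℝ))
      volume volume := by
    rw [Measure.volume_eq_prod, Measure.volume_eq_prod]
    exact Measure.measurePreserving_swap
  have hskew : MeasurePreserving (fun q : (ℝ × ℝ) × ℝ => (q.1, q.2 - q.1.1))
      (volume : Measure ((ℝ × ℝ) × ℝ)) volume := by
    rw [Measure.volume_eq_prod]
    exact (MeasurePreserving.id (volume : Measure (ℝ × ℝ))).skew_product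
      (g := fun (a : ℝ × ℝ) (b : ℝ) => b - a.1) (by fun_prop)
      (Filter.Eventually.of_forall fun a => (measurePreserving_sub_right volume a.1).map_eq)
  have hcomp := hswap2.comp (hskew.comp (hswap1.comp hstep1))
  have heq : (Prod.swap ∘ (fun q : (ℝ × ℝ) × ℝ => (q.1, q.2 - q.1.1)) ∘
      (Prod.swap ∘ (fun p : ℝ × ℝ × ℝ => (p.1, p.2.1, p.2.2 - p.2.1))))
      = fun p : ℝ × ℝ × ℝ => (p.1 - p.2.1, p.2.1, p.2.2 - p.2.1) := by
    funext p; simp [Function.comp, Prod.swap]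
  rwa [heq] at hcomp


set_option maxHeartbeats 1000000 in
private lemma mem_key (c αplus c₁ ε γ G Λminus kminus kplus Λplus : ℝ)
    (hc0 : 0 < c) (hc1 : c < 1)
    (hα0 : 0 < αplus) (hα : αplus ≤ c^2 / 16)
    (hc₁0 : 0 < c₁) (hc₁1 : c₁ < 1)
    (hε : 0 < ε) (hγ0 : 0 < γ) (hγ : γ < c₁^2 * ε^2)
    (hG0 : 0 < G) (hG : 10 * c₁^2 * ε^2 ≤ G)
    (hΛm : Λminus ≤ G)
    (hkm1 : 1 < kminus)
    (hkm : kminus ≤ (1/4) * Real.sqrt ((3/10) * (69 + 11 * Real.sqrt 33)))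
    (hkp : 2 ≤ kplus)
    (hΛp : Λplus = (G / 2) * (13 + Real.sqrt 185))
    (r s : ℝ) (hr : 1 ≤ r) (hrs : r < s) (hs : s ≤ 7/2)
    (x y z : ℝ)
    (hu1 : G + c₁^2 * ε^2 * (s/5 + s^2/100) < x - y) (hu2 : x - y < G + c₁^2 * ε^2)
    (hy1 : G + c₁^2 * ε^2 * r < y) (hy2 : y < G + c₁^2 * ε^2 * s)
    (hw1 : -(c₁^2 * ε^2) < z - y) (hw2 : z - y < -γ) :
    (G ≤ y ∧ y ≤ Λplus ∧
      (G + y) * Real.sqrt ((4 * G + y) / (5 * G)) < x ∧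
      x < min (kplus * y) (2 * Λplus) ∧
      max ((2 / c) * Real.sqrt αplus * y) G < z ∧ z < y) ∧
    (Λminus < y ∧ y < Λplus ∧
      kminus * y < x ∧ x < kplus * y ∧
      |x - y - G| < c₁^2 * ε^2 ∧
      y - c₁^2 * ε^2 < z ∧ z < y - γ) := by
  set d : ℝ := c₁^2 * ε^2 with hd
  have hd0 : 0 < d := by positivity
  have hdG : 10 * d ≤ G := by rw [hd]; linarith [hG]
  have hs33 : Real.sqrt 33 ≤ 23/4 := sqrt_le_of_sq (by norm_num) (by norm_num)
  have hK : kminus ≤ 63/40 := by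
    have h1 : Real.sqrt ((3/10) * (69 + 11 * Real.sqrt 33)) ≤ 63/10 :=
      sqrt_le_of_sq (by norm_num) (by linarith)
    linarith
  have hsa : Real.sqrt αplus ≤ c/4 := by
    refine sqrt_le_of_sq (by positivity) ?_
    have : (c/4)^2 = c^2/16 := by ring
    linarith
  have h185 : (0:ℝ) ≤ Real.sqrt 185 := Real.sqrt_nonneg _
  have hG185 : (0:ℝ) ≤ G * Real.sqrt 185 := mul_nonneg hG0.le h185
  have hs0 : (0:ℝ) < s := by linarith
  have hds : d * r ≤ d * s := by nlinarith
  have hds7 : d * s ≤ d * (7/2) := by nlinarith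
  have hdr1 : d ≤ d * r := by nlinarith
  have hyG : G < y := by linarith
  have hy0 : 0 < y := by linarith
  have hyub : y < G + d * (7/2) := by linarith
  have hdss : 0 < d * (s/5 + s^2/100) := by positivity
  have hq : Real.sqrt ((4*G + y) / (5*G)) ≤ 1 + (y - G)/(10*G) := by
    apply sqrt_le_of_sq
    · have : (0:ℝ) ≤ (y - G)/(10*G) := div_nonneg (by linarith) (by linarith)
      linarith
    · have hkey : (1 + (y - G)/(10*G))^2 = (4*G + y)/(5*G) + ((y - G)/(10*G))^2 := by
        field_simp; ring
      linarith [sq_nonneg ((y - G)/(10*G))]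
  have hsqrt : (G + y) * Real.sqrt ((4*G + y) / (5*G)) < x := by
    have h1 : (G + y) * Real.sqrt ((4*G + y) / (5*G)) ≤
        (G + y) * (1 + (y - G)/(10*G)) :=
      mul_le_mul_of_nonneg_left hq (by linarith)
    have h2 : (G + y) * (1 + (y - G)/(10*G)) =
        (G + y) + (G + y) * ((y - G)/(10*G)) := by ring
    have h3 : (G + y) * ((y - G)/(10*G)) ≤ d * (s/5 + s^2/100) := by
      rw [show (G + y) * ((y - G)/(10*G)) = ((G + y) * (y - G))/(10*G) from
        (mul_div_assoc _ _ _).symm]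
      rw [div_le_iff₀ (by linarith : (0:ℝ) < 10*G)]
      have hy2' : y^2 ≤ (G + d*s)^2 := by
        nlinarith [mul_nonneg (sub_nonneg.2 hy2.le)
          (show (0:ℝ) ≤ G + d*s + y by positivity)]
      have hmono : 10 * d * (d * s^2) ≤ G * (d * s^2) :=
        mul_le_mul_of_nonneg_right hdG (mul_nonneg hd0.le (sq_nonneg s))
      nlinarith [hy2', hmono]
    linarith
  have hmax : max ((2 / c) * Real.sqrt αplus * y) G < z := by
    apply max_lt
    · have h4 : (2 / c) * Real.sqrt αplus ≤ (2/c) * (c/4) :=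
        mul_le_mul_of_nonneg_left hsa (by positivity)
      have h5 := mul_le_mul_of_nonneg_right h4 hy0.le
      have hcc : (2/c) * (c/4) * y = y/2 := by field_simp; ring
      rw [hcc] at h5
      linarith
    · linarith
  have hkmy : kminus * y < x := by
    have h5 := mul_le_mul_of_nonneg_right hK hy0.le
    linarith
  have hkpy : x < kplus * y := by
    have h5 := mul_le_mul_of_nonneg_right hkp hy0.le
    linarith
  have hyp : y < Λplus := by rw [hΛp]; linarith
  refine ⟨⟨by linarith, hyp.le, hsqrt, lt_min hkpy (by rw [hΛp]; linarith), hmax,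
      by linarith⟩, by linarith, hyp, hkmy, hkpy, ?_, by linarith, by linarith⟩
  rw [abs_lt]
  constructor <;> linarith

set_option maxHeartbeats 1000000 in
/-- Proposition 2.5: the intersection `𝒜₀ ∩ 𝒜₁` of the action domains supporting
whiskered and maximal KAM tori is nonempty and has Lebesgue measure at least
`(9/10)·(c₁²ε² − γ)·c₁⁴·ε⁴`.  Points of `ℝ × ℝ × ℝ` are `(Λ₁, Λ₂, G₂)`. -/
theorem coexistence_domain_measure (c αplus c₁ ε γ G Λminus kminus kplus Λplus : ℝ)
    (hc0 : 0 < c) (hc1 : c < 1)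
    (hα0 : 0 < αplus) (hα : αplus ≤ c^2 / 16)
    (hc₁0 : 0 < c₁) (hc₁1 : c₁ < 1)
    (hε : 0 < ε) (hγ0 : 0 < γ) (hγ : γ < c₁^2 * ε^2)
    (hG0 : 0 < G) (hG : 10 * c₁^2 * ε^2 ≤ G)
    (hΛm : Λminus ≤ G)
    (hkm1 : 1 < kminus)
    (hkm : kminus ≤ (1/4) * Real.sqrt ((3/10) * (69 + 11 * Real.sqrt 33)))
    (hkp : 2 ≤ kplus)
    (hΛp : Λplus = (G / 2) * (13 + Real.sqrt 185)) :
    ({p : ℝ × ℝ × ℝ |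
        (G ≤ p.2.1 ∧ p.2.1 ≤ Λplus ∧
          (G + p.2.1) * Real.sqrt ((4 * G + p.2.1) / (5 * G)) < p.1 ∧
          p.1 < min (kplus * p.2.1) (2 * Λplus) ∧
          max ((2 / c) * Real.sqrt αplus * p.2.1) G < p.2.2 ∧ p.2.2 < p.2.1) ∧
        (Λminus < p.2.1 ∧ p.2.1 < Λplus ∧
          kminus * p.2.1 < p.1 ∧ p.1 < kplus * p.2.1 ∧
          |p.1 - p.2.1 - G| < c₁^2 * ε^2 ∧
          p.2.1 - c₁^2 * ε^2 < p.2.2 ∧ p.2.2 < p.2.1 - γ)}).Nonempty ∧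
    ENNReal.ofReal ((9/10) * (c₁^2 * ε^2 - γ) * c₁^4 * ε^4) ≤
      volume {p : ℝ × ℝ × ℝ |
        (G ≤ p.2.1 ∧ p.2.1 ≤ Λplus ∧
          (G + p.2.1) * Real.sqrt ((4 * G + p.2.1) / (5 * G)) < p.1 ∧
          p.1 < min (kplus * p.2.1) (2 * Λplus) ∧
          max ((2 / c) * Real.sqrt αplus * p.2.1) G < p.2.2 ∧ p.2.2 < p.2.1) ∧
        (Λminus < p.2.1 ∧ p.2.1 < Λplus ∧
          kminus * p.2.1 < p.1 ∧ p.1 < kplus * p.2.1 ∧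
          |p.1 - p.2.1 - G| < c₁^2 * ε^2 ∧
          p.2.1 - c₁^2 * ε^2 < p.2.2 ∧ p.2.2 < p.2.1 - γ)} := by
  have key := mem_key c αplus c₁ ε γ G Λminus kminus kplus Λplus hc0 hc1 hα0 hα
    hc₁0 hc₁1 hε hγ0 hγ hG0 hG hΛm hkm1 hkm hkp hΛp
  set d : ℝ := c₁^2 * ε^2 with hd
  have hd0 : 0 < d := by positivity
  have hdγ : 0 ≤ d - γ := by rw [hd]; linarith
  constructor
  · -- nonemptiness
    refine ⟨(2*G + d * (529/800) + d * (5/4), G + d * (5/4),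
      G + d * (5/4) - (γ + d)/2), ?_⟩
    exact key 1 (3/2) le_rfl (by norm_num) (by norm_num) _ _ _
      (by linarith) (by linarith) (by linarith) (by linarith)
      (by linarith) (by linarith)
  · -- measure bound
    set Av : Fin 5 → ℝ := ![129/400, 176/400, 225/400, 276/400, 329/400] with hAv
    set Rv : Fin 5 → ℝ := ![1, 3/2, 2, 5/2, 3] with hRv
    set Sv : Fin 5 → ℝ := ![3/2, 2, 5/2, 3, 7/2] with hSv
    set B : Fin 5 → Set (ℝ × ℝ × ℝ) := fun i =>
      Ioo (G + d * Av i) (G + d) ×ˢ (Ioo (G + d * Rv i) (G + d * Sv i) ×ˢ Ioo (-d) (-γ))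
      with hB
    set ψ : ℝ × ℝ × ℝ → ℝ × ℝ × ℝ := fun p => (p.1 - p.2.1, p.2.1, p.2.2 - p.2.1)
      with hψ
    have hfacts : ∀ i : Fin 5, 1 ≤ Rv i ∧ Rv i < Sv i ∧ Sv i ≤ 7/2 ∧
        Av i = Sv i / 5 + (Sv i)^2 / 100 ∧ Av i ≤ 1 := by
      intro i; fin_cases i <;> norm_num [hAv, hRv, hSv]
    have hsub : ∀ i, ψ ⁻¹' (B i) ⊆ {p : ℝ × ℝ × ℝ |
        (G ≤ p.2.1 ∧ p.2.1 ≤ Λplus ∧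
          (G + p.2.1) * Real.sqrt ((4 * G + p.2.1) / (5 * G)) < p.1 ∧
          p.1 < min (kplus * p.2.1) (2 * Λplus) ∧
          max ((2 / c) * Real.sqrt αplus * p.2.1) G < p.2.2 ∧ p.2.2 < p.2.1) ∧
        (Λminus < p.2.1 ∧ p.2.1 < Λplus ∧
          kminus * p.2.1 < p.1 ∧ p.1 < kplus * p.2.1 ∧
          |p.1 - p.2.1 - G| < c₁^2 * ε^2 ∧
          p.2.1 - c₁^2 * ε^2 < p.2.2 ∧ p.2.2 < p.2.1 - γ)} := by
      intro i p hp
      obtain ⟨h1, h2, h3⟩ := hp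
      obtain ⟨hr1, hr2, hr3, hr4, _⟩ := hfacts i
      exact key (Rv i) (Sv i) hr1 hr2 hr3 p.1 p.2.1 p.2.2
        (by rw [← hr4]; exact h1.1) h1.2 h2.1 h2.2 h3.1 h3.2
    have hBmeas : ∀ i, MeasurableSet (B i) :=
      fun i => (measurableSet_Ioo.prod (measurableSet_Ioo.prod measurableSet_Ioo))
    have hψm : Measurable ψ := shear_mp.measurable
    have hdisj : Pairwise (Function.onFun Disjoint fun i => ψ ⁻¹' (B i)) := by
      have hRS : ∀ i j : Fin 5, i < j → Sv i ≤ Rv j := by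
        intro i j hij
        fin_cases i <;> fin_cases j <;>
          first
          | exact absurd hij (by decide)
          | norm_num [hRv, hSv]
      intro i j hij
      rw [Function.onFun]
      refine Set.disjoint_left.2 fun p hpi hpj => ?_
      have h1 := hpi.2.1
      have h2 := hpj.2.1
      rcases lt_or_gt_of_ne hij with h | h
      · have hRSij := hRS i j h
        have h3 := h1.2
        have h4 := h2.1
        have : d * Sv i ≤ d * Rv j := by nlinarith
        linarith
      · have hRSij := hRS j i h
        have h3 := h2.2
        have h4 := h1.1
        have : d * Sv j ≤ d * Rv i := by nlinarith
        linarith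
    have hvol : ∀ i : Fin 5, volume (ψ ⁻¹' (B i)) =
        ENNReal.ofReal ((d - d * Av i) * ((d * Sv i - d * Rv i) * (d - γ))) := by
      intro i
      obtain ⟨hr1, hr2, hr3, hr4, hr5⟩ := hfacts i
      rw [shear_mp.measure_preimage (hBmeas i).nullMeasurableSet, hB]
      simp only
      rw [Measure.volume_eq_prod, Measure.prod_prod, Measure.volume_eq_prod,
        Measure.prod_prod, Real.volume_Ioo, Real.volume_Ioo, Real.volume_Ioo]
      rw [← ENNReal.ofReal_mul (by nlinarith : 0 ≤ G + d * Sv i - (G + d * Rv i)),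
        ← ENNReal.ofReal_mul (by nlinarith : 0 ≤ G + d - (G + d * Av i))]
      congr 1; ring
    have hlen : ∀ i : Fin 5, 0 ≤ (d - d * Av i) * ((d * Sv i - d * Rv i) * (d - γ)) := by
      intro i
      obtain ⟨hr1, hr2, hr3, hr4, hr5⟩ := hfacts i
      have ha : 0 ≤ d - d * Av i := by nlinarith
      have hb : 0 ≤ d * Sv i - d * Rv i := by nlinarith
      exact mul_nonneg ha (mul_nonneg hb hdγ)
    calc ENNReal.ofReal ((9/10) * (c₁^2 * ε^2 - γ) * c₁^4 * ε^4)
        ≤ ENNReal.ofReal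
            (∑ i : Fin 5, (d - d * Av i) * ((d * Sv i - d * Rv i) * (d - γ))) := by
          apply ENNReal.ofReal_le_ofReal
          have hde : (9/10) * (c₁^2 * ε^2 - γ) * c₁^4 * ε^4
              = (9/10) * (d - γ) * d^2 := by rw [hd]; ring
          rw [hde, Fin.sum_univ_five]
          simp only [hAv, hRv, hSv]
          norm_num [Matrix.cons_val_zero, Matrix.cons_val_one, Matrix.head_cons,
            Matrix.cons_val_two, Matrix.cons_val_three, Matrix.cons_val_four, Matrix.tail_cons]
          nlinarith [mul_nonneg (mul_nonneg hd0.le hd0.le) hdγ]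
      _ = ∑ i : Fin 5, ENNReal.ofReal
            ((d - d * Av i) * ((d * Sv i - d * Rv i) * (d - γ))) :=
          ENNReal.ofReal_sum_of_nonneg fun i _ => hlen i
      _ = ∑ i : Fin 5, volume (ψ ⁻¹' (B i)) := by
          exact Finset.sum_congr rfl fun i _ => (hvol i).symm
      _ = volume (⋃ i, ψ ⁻¹' (B i)) := by
          rw [measure_iUnion hdisj fun i => hψm (hBmeas i), tsum_fintype]
      _ ≤ _ := measure_mono (Set.iUnion_subset hsub)
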